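/- Transcriptome-guided learning risk bound (finite version): Let I, R, C, D be finite types, P a probability mass function on I × R × C × D, and T : I → R → C → (D → ℝ) a family of strictly positive probability mass functions. Define the marginalized predictor S(d | i, c) = ∑_r P(r | i, c) · T(d | i, r, c), where P(r | i, c) is the conditional of R given (I, C) (defined whenever the marginal P(i, c) > 0). Then the log-loss risk L[S] = ∑_{(i,c,d)} P(i,c,d) · (-log S(d | i,c)) satisfies L[S] ≤ H(D | I, C) + ∑_{(i,r,c)} P(i,r,c) · KL(P(D | i,r,c) ‖ T(· | i,r,c)), where H(D | I, C) = ∑_{(i,c)} P(i,c) · H(P(D | i,c)) is the conditional entropy. -/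

import Mathlib

open Real

noncomputable section

variable {I R C D : Type*} [Fintype I] [Fintype R] [Fintype C] [Fintype D]

/-- Marginal P(i,c). -/
def margIC (P : I × R × C × D → ℝ) (i : I) (c : C) : ℝ :=
  ∑ r, ∑ d, P (i, r, c, d)

/-- Marginal P(i,r,c). -/
def margIRC (P : I × R × C × D → ℝ) (i : I) (r : R) (c : C) : ℝ :=
  ∑ d, P (i, r, c, d)

/-- Marginal P(i,c,d). -/
def margICD (P : I × R × C × D → ℝ) (i : I) (c : C) (d : D) : ℝ :=
  ∑ r, P (i, r, c, d)

/-- Conditional P(r | i,c) (zero by convention when the marginal vanishes,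
since division by zero is zero). -/
def condR_IC (P : I × R × C × D → ℝ) (r : R) (i : I) (c : C) : ℝ :=
  margIRC P i r c / margIC P i c

/-- Conditional P(d | i,c). -/
def condD_IC (P : I × R × C × D → ℝ) (d : D) (i : I) (c : C) : ℝ :=
  margICD P i c d / margIC P i c

/-- Conditional P(d | i,r,c). -/
def condD_IRC (P : I × R × C × D → ℝ) (d : D) (i : I) (r : R) (c : C) : ℝ :=
  P (i, r, c, d) / margIRC P i r c

/-- Marginalized (student) predictor S(d | i,c) = ∑_r P(r|i,c) T(d|i,r,c). -/
def student (P : I × R × C × D → ℝ) (T : I → R → C → D → ℝ)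
    (d : D) (i : I) (c : C) : ℝ :=
  ∑ r, condR_IC P r i c * T i r c d

/-- Log-sum inequality. -/
lemma log_sum_ineq {R : Type*} [Fintype R] (a b : R → ℝ)
    (ha : ∀ r, 0 ≤ a r) (hb : ∀ r, 0 ≤ b r)
    (hab : ∀ r, 0 < a r → 0 < b r) :
    (∑ r, a r) * Real.log ((∑ r, a r) / (∑ r, b r)) ≤
      ∑ r, a r * Real.log (a r / b r) := by
  set A := ∑ r, a r with hA
  set B := ∑ r, b r with hB
  rcases eq_or_lt_of_le (Finset.sum_nonneg fun r _ => ha r) with h0 | hApos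
  · have hz : ∀ r ∈ Finset.univ, a r = 0 :=
      (Finset.sum_eq_zero_iff_of_nonneg fun r _ => ha r).mp h0.symm
    have : ∑ r, a r * Real.log (a r / b r) = 0 := by
      apply Finset.sum_eq_zero
      intro r hr
      rw [hz r hr]; ring
    have hA0 : A = 0 := by rw [hA, ← h0]
    rw [this, hA0]; simp
  · have hBpos : 0 < B := by
      obtain ⟨r, hr⟩ : ∃ r, 0 < a r := by
        by_contra h
        push_neg at h
        have : A ≤ 0 := Finset.sum_nonpos fun r _ => h r
        linarith
      have hbr := hab r hr
      calc 0 < b r := hbr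
        _ ≤ B := Finset.single_le_sum (fun r _ => hb r) (Finset.mem_univ r)
    have key : ∀ r, a r * Real.log (A / B) + (a r - A / B * b r)
        ≤ a r * Real.log (a r / b r) := by
      intro r
      rcases eq_or_lt_of_le (ha r) with h0 | hpos
      · rw [← h0]
        have : 0 ≤ A / B * b r :=
          mul_nonneg (div_nonneg hApos.le hBpos.le) (hb r)
        simp; linarith
      · have hbr := hab r hpos
        have hlog := Real.log_le_sub_one_of_pos
          (show 0 < (b r * A) / (a r * B) by positivity)
        have e1 : Real.log ((b r * A) / (a r * B))
            = Real.log (b r) + Real.log A - Real.log (a r) - Real.log B := by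
          rw [Real.log_div (by positivity) (by positivity),
            Real.log_mul (ne_of_gt hbr) (ne_of_gt hApos),
            Real.log_mul (ne_of_gt hpos) (ne_of_gt hBpos)]
          ring
        have e2 : Real.log (a r / b r) = Real.log (a r) - Real.log (b r) :=
          Real.log_div (ne_of_gt hpos) (ne_of_gt hbr)
        have e3 : Real.log (A / B) = Real.log A - Real.log B :=
          Real.log_div (ne_of_gt hApos) (ne_of_gt hBpos)
        rw [e1] at hlog
        rw [e2, e3]
        have h4 : a r * (Real.log (b r) + Real.log A - Real.log (a r) - Real.log B)
            ≤ a r * ((b r * A) / (a r * B) - 1) :=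
          mul_le_mul_of_nonneg_left hlog (le_of_lt hpos)
        have h5 : a r * ((b r * A) / (a r * B) - 1) = A / B * b r - a r := by
          field_simp
        nlinarith [h4, h5]
    calc A * Real.log (A / B)
        = ∑ r, (a r * Real.log (A / B) + (a r - A / B * b r)) := by
          rw [Finset.sum_add_distrib, Finset.sum_sub_distrib, ← Finset.sum_mul,
            ← Finset.mul_sum, ← hA, ← hB]
          field_simp
          ring
      _ ≤ ∑ r, a r * Real.log (a r / b r) := Finset.sum_le_sum fun r _ => key r

/-- Rewriting the KL summand without conditionals. -/
lemma kl_rw (P : I × R × C × D → ℝ) (T : I → R → C → D → ℝ)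
    (hP0 : ∀ x, 0 ≤ P x) (i : I) (r : R) (c : C) :
    margIRC P i r c *
        (∑ d, condD_IRC P d i r c *
          Real.log (condD_IRC P d i r c / T i r c d))
      = ∑ d, P (i, r, c, d) *
          Real.log (P (i, r, c, d) / (margIRC P i r c * T i r c d)) := by
  by_cases h : margIRC P i r c = 0
  · have hz : ∀ d ∈ Finset.univ, P (i, r, c, d) = 0 :=
      (Finset.sum_eq_zero_iff_of_nonneg fun d _ => hP0 (i, r, c, d)).mp h
    rw [h, zero_mul]
    symm
    apply Finset.sum_eq_zero
    intro d hd
    rw [hz d hd]; ring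
  · rw [Finset.mul_sum]
    apply Finset.sum_congr rfl
    intro d _
    have hc : margIRC P i r c * (P (i, r, c, d) / margIRC P i r c)
        = P (i, r, c, d) := by field_simp
    simp only [condD_IRC, div_div]
    rw [← mul_assoc, hc]

/-- Per-(i,c,d) key inequality. -/
lemma per_icd (P : I × R × C × D → ℝ) (T : I → R → C → D → ℝ)
    (hP0 : ∀ x, 0 ≤ P x) (hT0 : ∀ i r c d, 0 < T i r c d)
    (i : I) (c : C) (d : D) :
    margICD P i c d * (-Real.log (student P T d i c))
      ≤ margICD P i c d * (-Real.log (condD_IC P d i c))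
        + ∑ r, P (i, r, c, d) *
            Real.log (P (i, r, c, d) / (margIRC P i r c * T i r c d)) := by
  have hICD0 : 0 ≤ margICD P i c d :=
    Finset.sum_nonneg fun r _ => hP0 (i, r, c, d)
  by_cases h : margICD P i c d = 0
  · have hz : ∀ r ∈ Finset.univ, P (i, r, c, d) = 0 :=
      (Finset.sum_eq_zero_iff_of_nonneg fun r _ => hP0 (i, r, c, d)).mp h
    have hs : ∑ r, P (i, r, c, d) *
        Real.log (P (i, r, c, d) / (margIRC P i r c * T i r c d)) = 0 := by
      apply Finset.sum_eq_zero
      intro r hr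
      rw [hz r hr]; ring
    rw [h, hs]; simp
  · have hpos : 0 < margICD P i c d := lt_of_le_of_ne hICD0 (Ne.symm h)
    have hICeq : margIC P i c = ∑ d', margICD P i c d' := by
      rw [margIC, Finset.sum_comm]
      rfl
    have hICpos : 0 < margIC P i c := by
      rw [hICeq]
      calc 0 < margICD P i c d := hpos
        _ ≤ ∑ d', margICD P i c d' :=
          Finset.single_le_sum
            (fun d' _ => Finset.sum_nonneg fun r _ => hP0 (i, r, c, d'))
            (Finset.mem_univ d)
    set B := ∑ r, margIRC P i r c * T i r c d with hB
    have hBpos : 0 < B := by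
      have hICeq2 : margIC P i c = ∑ r, margIRC P i r c := rfl
      obtain ⟨r, hr⟩ : ∃ r, 0 < margIRC P i r c := by
        by_contra hcon
        push_neg at hcon
        have : margIC P i c ≤ 0 := by
          rw [hICeq2]; exact Finset.sum_nonpos fun r _ => hcon r
        linarith
      calc 0 < margIRC P i r c * T i r c d :=
            mul_pos hr (hT0 i r c d)
        _ ≤ B := Finset.single_le_sum
            (fun r _ => mul_nonneg
              (Finset.sum_nonneg fun d' _ => hP0 (i, r, c, d'))
              (hT0 i r c d).le)
            (Finset.mem_univ r)
    have hS : student P T d i c = B / margIC P i c := by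
      rw [student, hB, Finset.sum_div]
      apply Finset.sum_congr rfl
      intro r _
      rw [condR_IC, div_mul_eq_mul_div]
    have e1 : Real.log (student P T d i c)
        = Real.log B - Real.log (margIC P i c) := by
      rw [hS, Real.log_div (ne_of_gt hBpos) (ne_of_gt hICpos)]
    have e2 : Real.log (condD_IC P d i c)
        = Real.log (margICD P i c d) - Real.log (margIC P i c) := by
      rw [condD_IC, Real.log_div (ne_of_gt hpos) (ne_of_gt hICpos)]
    have hlsi : margICD P i c d *
        (Real.log (margICD P i c d) - Real.log B)
        ≤ ∑ r, P (i, r, c, d) *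
            Real.log (P (i, r, c, d) / (margIRC P i r c * T i r c d)) := by
      have := log_sum_ineq (fun r => P (i, r, c, d))
        (fun r => margIRC P i r c * T i r c d)
        (fun r => hP0 (i, r, c, d))
        (fun r => mul_nonneg
          (Finset.sum_nonneg fun d' _ => hP0 (i, r, c, d'))
          (hT0 i r c d).le)
        (fun r hr => by
          have hm : 0 < margIRC P i r c :=
            lt_of_lt_of_le hr
              (Finset.single_le_sum (fun d' _ => hP0 (i, r, c, d'))
                (Finset.mem_univ d))
          exact mul_pos hm (hT0 i r c d))
      have hsa : (∑ r, P (i, r, c, d)) = margICD P i c d := rfl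
      have hsb : (∑ r, margIRC P i r c * T i r c d) = B := rfl
      rw [hsa, hsb, Real.log_div (ne_of_gt hpos) (ne_of_gt hBpos)] at this
      exact this
    rw [e1, e2]
    nlinarith [hlsi]

/-- Transcriptome-guided learning risk bound (finite version):
L[S] ≤ H(D | I,C) + E_{(i,r,c)} KL(P(D|i,r,c) ‖ T(·|i,r,c)). -/
theorem transcriptome_guided_risk_bound
    [Nonempty I] [Nonempty R] [Nonempty C] [Nonempty D]
    (P : I × R × C × D → ℝ) (T : I → R → C → D → ℝ)
    (hP0 : ∀ x, 0 ≤ P x) (hP1 : ∑ x, P x = 1)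
    (hT0 : ∀ i r c d, 0 < T i r c d) (hT1 : ∀ i r c, ∑ d, T i r c d = 1) :
    ∑ i, ∑ c, ∑ d, margICD P i c d * (-Real.log (student P T d i c))
      ≤ (∑ i, ∑ c, ∑ d, margICD P i c d * (-Real.log (condD_IC P d i c)))
        + ∑ i, ∑ r, ∑ c, margIRC P i r c *
            (∑ d, condD_IRC P d i r c *
              Real.log (condD_IRC P d i r c / T i r c d)) := by
  have hK : ∑ i, ∑ r, ∑ c, margIRC P i r c *
      (∑ d, condD_IRC P d i r c *
        Real.log (condD_IRC P d i r c / T i r c d))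
      = ∑ i, ∑ c, ∑ d, ∑ r, P (i, r, c, d) *
          Real.log (P (i, r, c, d) / (margIRC P i r c * T i r c d)) := by
    apply Finset.sum_congr rfl
    intro i _
    rw [Finset.sum_comm]
    apply Finset.sum_congr rfl
    intro c _
    rw [Finset.sum_comm]
    apply Finset.sum_congr rfl
    intro r _
    exact kl_rw P T hP0 i r c
  rw [hK, ← Finset.sum_add_distrib]
  apply Finset.sum_le_sum
  intro i _
  rw [← Finset.sum_add_distrib]
  apply Finset.sum_le_sum
  intro c _
  rw [← Finset.sum_add_distrib]
  apply Finset.sum_le_sum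
  intro d _
  exact per_icd P T hP0 hT0 i c d

end
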